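/- Let c : ℕ × ℕ → ℂ. Then c is a phase matrix if and only if there exists a family (v_k)_{k∈ℕ} of unit vectors in the Hilbert space ℓ²(ℕ,ℂ) such that c_{k,l} = ⟨v_k, v_l⟩ for all k, l ∈ ℕ (inner product conjugate-linear in the first argument). -/

import Mathlib

open scoped ComplexConjugate ComplexOrder

/-- A phase matrix: a positive semidefinite matrix `c : ℕ × ℕ → ℂ` with unit diagonal. -/
def IsPhaseMatrix (c : ℕ → ℕ → ℂ) : Prop :=
  (∀ a : ℕ →₀ ℂ, 0 ≤ a.sum fun n an => a.sum fun m am => conj an * c n m * am) ∧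
  (∀ n : ℕ, c n n = 1)

namespace PhaseGramAux

open InnerProductSpace

/-- The sesquilinear form attached to the matrix `c`. -/
noncomputable def B (c : ℕ → ℕ → ℂ) (a b : ℕ →₀ ℂ) : ℂ :=
  a.sum fun n an => b.sum fun m am => conj an * c n m * am

lemma B_eq (c : ℕ → ℕ → ℂ) (a b : ℕ →₀ ℂ) {s t : Finset ℕ}
    (hs : a.support ⊆ s) (ht : b.support ⊆ t) :
    B c a b = ∑ n ∈ s, ∑ m ∈ t, conj (a n) * c n m * b m := by
  rw [B, Finsupp.sum]
  rw [Finset.sum_subset hs]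
  · refine Finset.sum_congr rfl fun n _ => ?_
    rw [Finsupp.sum, Finset.sum_subset ht]
    intro m _ hm
    simp [Finsupp.notMem_support_iff.mp hm]
  · intro n _ hn
    simp [Finsupp.sum, Finsupp.notMem_support_iff.mp hn]

lemma B_add_left (c : ℕ → ℕ → ℂ) (a a' b : ℕ →₀ ℂ) :
    B c (a + a') b = B c a b + B c a' b := by
  rw [B_eq c (a + a') b (s := a.support ∪ a'.support) (t := b.support)
      Finsupp.support_add (subset_refl _),
    B_eq c a b (s := a.support ∪ a'.support) (t := b.support)
      Finset.subset_union_left (subset_refl _),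
    B_eq c a' b (s := a.support ∪ a'.support) (t := b.support)
      Finset.subset_union_right (subset_refl _),
    ← Finset.sum_add_distrib]
  refine Finset.sum_congr rfl fun n _ => ?_
  rw [← Finset.sum_add_distrib]
  refine Finset.sum_congr rfl fun m _ => ?_
  simp only [Finsupp.add_apply, map_add]
  ring

lemma B_add_right (c : ℕ → ℕ → ℂ) (a b b' : ℕ →₀ ℂ) :
    B c a (b + b') = B c a b + B c a b' := by
  rw [B_eq c a (b + b') (s := a.support) (t := b.support ∪ b'.support)
      (subset_refl _) Finsupp.support_add,
    B_eq c a b (s := a.support) (t := b.support ∪ b'.support)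
      (subset_refl _) Finset.subset_union_left,
    B_eq c a b' (s := a.support) (t := b.support ∪ b'.support)
      (subset_refl _) Finset.subset_union_right,
    ← Finset.sum_add_distrib]
  refine Finset.sum_congr rfl fun n _ => ?_
  rw [← Finset.sum_add_distrib]
  refine Finset.sum_congr rfl fun m _ => ?_
  simp only [Finsupp.add_apply]
  ring

lemma B_smul_left (c : ℕ → ℕ → ℂ) (z : ℂ) (a b : ℕ →₀ ℂ) :
    B c (z • a) b = conj z * B c a b := by
  rw [B_eq c (z • a) b (s := a.support) (t := b.support)
      Finsupp.support_smul (subset_refl _),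
    B_eq c a b (s := a.support) (t := b.support) (subset_refl _) (subset_refl _),
    Finset.mul_sum]
  refine Finset.sum_congr rfl fun n _ => ?_
  rw [Finset.mul_sum]
  refine Finset.sum_congr rfl fun m _ => ?_
  simp only [Finsupp.smul_apply, smul_eq_mul, map_mul]
  ring

lemma B_smul_right (c : ℕ → ℕ → ℂ) (z : ℂ) (a b : ℕ →₀ ℂ) :
    B c a (z • b) = z * B c a b := by
  rw [B_eq c a (z • b) (s := a.support) (t := b.support)
      (subset_refl _) Finsupp.support_smul,
    B_eq c a b (s := a.support) (t := b.support) (subset_refl _) (subset_refl _),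
    Finset.mul_sum]
  refine Finset.sum_congr rfl fun n _ => ?_
  rw [Finset.mul_sum]
  refine Finset.sum_congr rfl fun m _ => ?_
  simp only [Finsupp.smul_apply, smul_eq_mul]
  ring

lemma B_sub_left (c : ℕ → ℕ → ℂ) (a a' b : ℕ →₀ ℂ) :
    B c (a - a') b = B c a b - B c a' b := by
  have h : a - a' = a + (-1 : ℂ) • a' := by
    rw [neg_one_smul, sub_eq_add_neg]
  rw [h, B_add_left, B_smul_left]
  simp; ring

lemma B_sub_right (c : ℕ → ℕ → ℂ) (a b b' : ℕ →₀ ℂ) :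
    B c a (b - b') = B c a b - B c a b' := by
  have h : b - b' = b + (-1 : ℂ) • b' := by
    rw [neg_one_smul, sub_eq_add_neg]
  rw [h, B_add_right, B_smul_right]
  ring

section PSD

variable (c : ℕ → ℕ → ℂ) (hc : ∀ a, 0 ≤ B c a a)

include hc in
lemma B_self_im (a : ℕ →₀ ℂ) : (B c a a).im = 0 :=
  ((Complex.nonneg_iff.mp (hc a)).2).symm

include hc in
lemma B_self_re_nonneg (a : ℕ →₀ ℂ) : 0 ≤ (B c a a).re :=
  (Complex.nonneg_iff.mp (hc a)).1

include hc in
lemma B_conj (a b : ℕ →₀ ℂ) : B c b a = conj (B c a b) := by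
  have e1 : B c (a + b) (a + b) = B c a a + (B c a b + B c b a) + B c b b := by
    rw [B_add_left, B_add_right, B_add_right]; ring
  have e2 : B c (a + Complex.I • b) (a + Complex.I • b)
      = B c a a + (Complex.I * B c a b - Complex.I * B c b a) + B c b b := by
    rw [B_add_left, B_add_right, B_add_right, B_smul_left, B_smul_right, B_smul_left,
      B_smul_right, Complex.conj_I]
    ring_nf
    linear_combination (-(B c b b)) * Complex.I_sq
  have h1 := B_self_im c hc (a + b)
  rw [e1] at h1
  have h2 := B_self_im c hc (a + Complex.I • b)
  rw [e2] at h2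
  have ha := B_self_im c hc a
  have hb := B_self_im c hc b
  simp only [Complex.add_im, Complex.sub_im, Complex.mul_im, Complex.I_re, Complex.I_im,
    ha, hb] at h1 h2
  apply Complex.ext
  · simp only [Complex.conj_re]; linarith
  · simp only [Complex.conj_im]; linarith

include hc in
lemma B_null_re {a : ℕ →₀ ℂ} (ha : B c a a = 0) (b : ℕ →₀ ℂ) : (B c b a).re = 0 := by
  by_contra hre
  set r : ℝ := (B c b a).re with hr
  set t : ℝ := -((B c b b).re + 1) / (2 * r) with ht
  have e : B c (b + (t : ℂ) • a) (b + (t : ℂ) • a)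
      = B c b b + (t : ℂ) * (B c b a + conj (B c b a)) := by
    rw [B_add_left, B_add_right, B_add_right, B_smul_left, B_smul_right, B_smul_left,
      B_smul_right, ha, B_conj c hc b a, Complex.conj_ofReal]
    ring
  rw [Complex.add_conj] at e
  have hre2 := B_self_re_nonneg c hc (b + (t : ℂ) • a)
  rw [e] at hre2
  simp only [Complex.add_re, ← Complex.ofReal_mul, Complex.ofReal_re] at hre2
  have htr : t * (2 * r) = -((B c b b).re + 1) := by
    rw [ht]; field_simp
  rw [← hr, htr] at hre2
  linarith

include hc in
lemma B_null {a : ℕ →₀ ℂ} (ha : B c a a = 0) (b : ℕ →₀ ℂ) : B c b a = 0 := by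
  have h1 := B_null_re c hc ha b
  have ha' : B c (Complex.I • a) (Complex.I • a) = 0 := by
    rw [B_smul_left, B_smul_right, ha]; ring
  have h2 := B_null_re c hc ha' b
  rw [B_smul_right] at h2
  simp only [Complex.mul_re, Complex.I_re, Complex.I_im, zero_mul, one_mul, zero_sub] at h2
  apply Complex.ext
  · exact h1
  · simpa using h2

include hc in
lemma B_null' {a : ℕ →₀ ℂ} (ha : B c a a = 0) (b : ℕ →₀ ℂ) : B c a b = 0 := by
  rw [B_conj c hc, B_null c hc ha b, map_zero]

lemma B_zero : B c 0 0 = 0 := by simp [B]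

/-- The null space of the form `B c`. -/
noncomputable def nullSpace : Submodule ℂ (ℕ →₀ ℂ) where
  carrier := {a | B c a a = 0}
  zero_mem' := B_zero c
  add_mem' := by
    intro x y hx hy
    have hx' : B c x x = 0 := hx
    have hy' : B c y y = 0 := hy
    show B c (x + y) (x + y) = 0
    rw [B_add_left, B_add_right, B_add_right, hx', hy', B_null c hc hy' x,
      B_null c hc hx' y]
    ring
  smul_mem' := by
    intro z x hx
    have hx' : B c x x = 0 := hx
    show B c (z • x) (z • x) = 0
    rw [B_smul_left, B_smul_right, hx']
    ring

lemma mem_nullSpace {a : ℕ →₀ ℂ} : a ∈ nullSpace c hc ↔ B c a a = 0 := Iff.rfl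

/-- The semi-inner product descends to the quotient. -/
noncomputable def innerQ (x y : (ℕ →₀ ℂ) ⧸ nullSpace c hc) : ℂ :=
  Quotient.liftOn₂' x y (B c) (by
    intro a₁ a₂ b₁ b₂ h1 h2
    have h1' : a₁ - b₁ ∈ nullSpace c hc := (Submodule.quotientRel_def _).mp h1
    have h2' : a₂ - b₂ ∈ nullSpace c hc := (Submodule.quotientRel_def _).mp h2
    have e1 : B c a₁ (a₂ - b₂) = 0 := B_null c hc h2' a₁
    have e2 : B c (a₁ - b₁) b₂ = 0 := B_null' c hc h1' b₂
    rw [B_sub_right] at e1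
    rw [B_sub_left] at e2
    linear_combination e1 + e2)

lemma innerQ_mk (a b : ℕ →₀ ℂ) :
    innerQ c hc (Submodule.Quotient.mk a) (Submodule.Quotient.mk b) = B c a b := rfl

/-- The inner product space core on the quotient. -/
noncomputable def core : InnerProductSpace.Core ℂ ((ℕ →₀ ℂ) ⧸ nullSpace c hc) where
  inner := innerQ c hc
  conj_inner_symm := by
    rintro ⟨x⟩ ⟨y⟩
    exact (B_conj c hc _ _).symm
  re_inner_nonneg := by
    rintro ⟨x⟩
    exact B_self_re_nonneg c hc x
  add_left := by
    rintro ⟨x⟩ ⟨y⟩ ⟨z⟩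
    exact B_add_left c x y z
  smul_left := by
    rintro ⟨x⟩ ⟨y⟩ r
    exact B_smul_left c r x y
  definite := by
    rintro ⟨x⟩ hx
    exact (Submodule.Quotient.mk_eq_zero _).mpr hx

end PSD

section Expansion

variable {E : Type*} [NormedAddCommGroup E] [InnerProductSpace ℂ E]

lemma gs_inner_eq_zero (f : ℕ → E) {n m : ℕ} (hnm : n ≠ m) :
    (inner ℂ (gramSchmidtNormed ℂ f n) (gramSchmidtNormed ℂ f m) : ℂ) = 0 := by
  by_cases hn : gramSchmidtNormed ℂ f n = 0
  · simp [hn]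
  by_cases hm : gramSchmidtNormed ℂ f m = 0
  · simp [hm]
  exact (gramSchmidtNormed_orthonormal' (𝕜 := ℂ) f).2
    (i := ⟨n, hn⟩) (j := ⟨m, hm⟩) (by simpa using hnm)

lemma gs_coeff_zero (f : ℕ → E) {k n : ℕ} (hkn : k < n) :
    (inner ℂ (gramSchmidtNormed ℂ f n) (f k) : ℂ) = 0 := by
  have hfk : f k ∈ Submodule.span ℂ (gramSchmidtNormed ℂ f '' Set.Iic k) := by
    rw [span_gramSchmidtNormed, span_gramSchmidt_Iic]
    exact Submodule.subset_span ⟨k, Set.mem_Iic.mpr le_rfl, rfl⟩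
  refine Submodule.span_induction
    (p := fun x _ => (inner ℂ (gramSchmidtNormed ℂ f n) x : ℂ) = 0) ?_ ?_ ?_ ?_ hfk
  · rintro x ⟨m, hm, rfl⟩
    exact gs_inner_eq_zero f (lt_of_le_of_lt (Set.mem_Iic.mp hm) hkn).ne'
  · exact inner_zero_right _
  · intro x y _ _ h1 h2
    rw [inner_add_right, h1, h2, add_zero]
  · intro a x _ h1
    rw [inner_smul_right, h1, mul_zero]

lemma inner_eq_sum_coeff (f : ℕ → E) (k l : ℕ) :
    (inner ℂ (f k) (f l) : ℂ) = ∑ n ∈ Finset.Iic (max k l),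
      conj (inner ℂ (gramSchmidtNormed ℂ f n) (f k) : ℂ) *
        (inner ℂ (gramSchmidtNormed ℂ f n) (f l) : ℂ) := by
  set g := gramSchmidtNormed ℂ f with hg
  set S := Finset.Iic (max k l) with hS
  set u := f l - ∑ n ∈ S, (inner ℂ (g n) (f l) : ℂ) • g n with hu
  have hgu : ∀ n, (inner ℂ (g n) u : ℂ) = 0 := by
    intro n
    by_cases hn : g n = 0
    · simp [hn]
    rw [hu, inner_sub_right, inner_sum]
    simp_rw [inner_smul_right]
    by_cases hnS : n ∈ S
    · rw [Finset.sum_eq_single_of_mem n hnS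
        (fun m _ hmn => by rw [gs_inner_eq_zero f (Ne.symm hmn), mul_zero])]
      rw [inner_self_eq_norm_sq_to_K, gramSchmidtNormed_unit_length' hn]
      simp
    · have hl : l < n := by
        simp only [hS, Finset.mem_Iic, not_le] at hnS
        omega
      rw [gs_coeff_zero f hl, Finset.sum_eq_zero
        (fun m hm => by
          have : n ≠ m := by
            simp only [hS, Finset.mem_Iic, not_le] at hnS
            have := Finset.mem_Iic.mp hm
            omega
          rw [gs_inner_eq_zero f this, mul_zero])]
      simp
  have hfku : (inner ℂ (f k) u : ℂ) = 0 := by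
    have hfk : f k ∈ Submodule.span ℂ (Set.range g) := by
      rw [hg, span_gramSchmidtNormed_range, span_gramSchmidt]
      exact Submodule.subset_span ⟨k, rfl⟩
    refine Submodule.span_induction (p := fun x _ => (inner ℂ x u : ℂ) = 0) ?_ ?_ ?_ ?_ hfk
    · rintro x ⟨m, rfl⟩
      exact hgu m
    · exact inner_zero_left _
    · intro x y _ _ h1 h2
      rw [inner_add_left, h1, h2, add_zero]
    · intro a x _ h1
      rw [inner_smul_left, h1, mul_zero]
  have hfl : f l = u + ∑ n ∈ S, (inner ℂ (g n) (f l) : ℂ) • g n := by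
    rw [hu]; abel
  calc (inner ℂ (f k) (f l) : ℂ)
      = (inner ℂ (f k) (u + ∑ n ∈ S, (inner ℂ (g n) (f l) : ℂ) • g n) : ℂ) := by rw [← hfl]
    _ = ∑ n ∈ S, (inner ℂ (g n) (f l) : ℂ) * (inner ℂ (f k) (g n) : ℂ) := by
        rw [inner_add_right, hfku, zero_add, inner_sum]
        simp_rw [inner_smul_right]
    _ = ∑ n ∈ S, conj (inner ℂ (g n) (f k) : ℂ) * (inner ℂ (g n) (f l) : ℂ) := by
        refine Finset.sum_congr rfl fun n _ => ?_
        rw [inner_conj_symm]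
        ring

end Expansion

end PhaseGramAux

open PhaseGramAux InnerProductSpace in
theorem phase_matrix_iff_gram
    (c : ℕ → ℕ → ℂ) :
    IsPhaseMatrix c ↔
      ∃ v : ℕ → lp (fun _ : ℕ => ℂ) 2, (∀ k, ‖v k‖ = 1) ∧
        ∀ k l : ℕ, c k l = (inner ℂ (v k) (v l) : ℂ) := by
  constructor
  · rintro ⟨hpos, hdiag⟩
    have hc : ∀ a, 0 ≤ B c a a := hpos
    letI : NormedAddCommGroup ((ℕ →₀ ℂ) ⧸ nullSpace c hc) := (core c hc).toNormedAddCommGroup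
    letI : InnerProductSpace ℂ ((ℕ →₀ ℂ) ⧸ nullSpace c hc) := InnerProductSpace.ofCore (core c hc).toCore
    set f : ℕ → ((ℕ →₀ ℂ) ⧸ nullSpace c hc) :=
      fun k => Submodule.Quotient.mk (Finsupp.single k 1) with hfdef
    have hf : ∀ k l, (inner ℂ (f k) (f l) : ℂ) = c k l := by
      intro k l
      show innerQ c hc (Submodule.Quotient.mk (Finsupp.single k 1))
        (Submodule.Quotient.mk (Finsupp.single l 1)) = c k l
      rw [innerQ_mk, B_eq c _ _ (s := {k}) (t := {l})
        Finsupp.support_single_subset Finsupp.support_single_subset]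
      simp
    have hz : ∀ k, Memℓp (fun n => (inner ℂ (gramSchmidtNormed ℂ f n) (f k) : ℂ)) 2 := by
      intro k
      refine Memℓp.of_exponent_ge (memℓp_zero ?_) zero_le
      refine Set.Finite.subset (Set.finite_Iic k) ?_
      intro n hn
      simp only [Set.mem_setOf_eq] at hn
      by_contra h
      simp only [Set.mem_Iic, not_le] at h
      exact hn (gs_coeff_zero f h)
    set v : ℕ → lp (fun _ : ℕ => ℂ) 2 :=
      fun k => ⟨fun n => (inner ℂ (gramSchmidtNormed ℂ f n) (f k) : ℂ), hz k⟩ with hvdef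
    have hvi : ∀ k l, (inner ℂ (v k) (v l) : ℂ) = c k l := by
      intro k l
      have hvanish : ∀ n ∉ Finset.Iic (max k l),
          (inner ℂ ((v k : ∀ _ : ℕ, ℂ) n) ((v l : ∀ _ : ℕ, ℂ) n) : ℂ) = 0 := by
        intro n hn
        simp only [Finset.mem_Iic, not_le] at hn
        have hk : k < n := lt_of_le_of_lt (le_max_left k l) hn
        have : (v k : ∀ _ : ℕ, ℂ) n = 0 := gs_coeff_zero f hk
        rw [this, inner_zero_left]
      calc (inner ℂ (v k) (v l) : ℂ)
          = ∑' n, (inner ℂ ((v k : ∀ _ : ℕ, ℂ) n) ((v l : ∀ _ : ℕ, ℂ) n) : ℂ) :=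
            lp.inner_eq_tsum _ _
        _ = ∑ n ∈ Finset.Iic (max k l),
            (inner ℂ ((v k : ∀ _ : ℕ, ℂ) n) ((v l : ∀ _ : ℕ, ℂ) n) : ℂ) := tsum_eq_sum hvanish
        _ = ∑ n ∈ Finset.Iic (max k l),
            conj (inner ℂ (gramSchmidtNormed ℂ f n) (f k) : ℂ) *
              (inner ℂ (gramSchmidtNormed ℂ f n) (f l) : ℂ) := by
            refine Finset.sum_congr rfl fun n _ => ?_
            rw [RCLike.inner_apply, mul_comm]
        _ = (inner ℂ (f k) (f l) : ℂ) := (inner_eq_sum_coeff f k l).symm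
        _ = c k l := hf k l
    refine ⟨v, ?_, fun k l => (hvi k l).symm⟩
    intro k
    have h1 : (inner ℂ (v k) (v k) : ℂ) = 1 := by rw [hvi, hdiag]
    rw [inner_self_eq_norm_sq_to_K] at h1
    rw [← RCLike.ofReal_pow, ← RCLike.ofReal_one (K := ℂ)] at h1
    have h2 : ‖v k‖ ^ 2 = (1 : ℝ) := RCLike.ofReal_inj.mp h1
    nlinarith [norm_nonneg (v k)]
  · rintro ⟨v, hv, hvc⟩
    constructor
    · intro a
      have key : (a.sum fun n an => a.sum fun m am => conj an * c n m * am)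
          = (inner ℂ (∑ n ∈ a.support, a n • v n) (∑ m ∈ a.support, a m • v m) : ℂ) := by
        rw [sum_inner, Finsupp.sum]
        refine Finset.sum_congr rfl fun n _ => ?_
        rw [inner_sum, Finsupp.sum]
        refine Finset.sum_congr rfl fun m _ => ?_
        rw [inner_smul_left, inner_smul_right, ← hvc]
        ring
      rw [key, inner_self_eq_norm_sq_to_K, sq, ← RCLike.ofReal_mul]
      exact RCLike.ofReal_nonneg.mpr (mul_self_nonneg _)
    · intro n
      rw [hvc n n, inner_self_eq_norm_sq_to_K, hv n]
      norm_num
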